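/- Let λ ≤ κ be uncountable cardinals with λ^{<λ} = λ, let H be a κ-existentially closed group, and let K ≤ H be a subgroup of cardinality λ. Then there exists a λ-existentially closed subgroup K̄ of H with K ≤ K̄ ≤ H and |K̄| = λ. -/

import Mathlib

universe u

/-- `G` is `κ`-existentially closed: every system of fewer than `κ` equations and fewer than
`κ` inequations (words in the free product of `G` with free variables `X`), which has a
solution in some overgroup of `G`, already has a solution in `G`. -/
def IsKappaEC (κ : Cardinal.{u}) (G : Type u) [Group G] : Prop :=
  ∀ (X : Type u) (eqs ineqs : Set (FreeGroup (G ⊕ X))),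
    Cardinal.mk eqs < κ → Cardinal.mk ineqs < κ →
    (∃ (H : Type u) (_ : Group H) (i : G →* H), Function.Injective i ∧
      ∃ v : X → H,
        (∀ w ∈ eqs, FreeGroup.lift (Sum.elim (⇑i) v) w = 1) ∧
        (∀ w ∈ ineqs, FreeGroup.lift (Sum.elim (⇑i) v) w ≠ 1)) →
    ∃ v : X → G,
      (∀ w ∈ eqs, FreeGroup.lift (Sum.elim (id : G → G) v) w = 1) ∧
      (∀ w ∈ ineqs, FreeGroup.lift (Sum.elim (id : G → G) v) w ≠ 1)

open Cardinal

namespace ECAux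

noncomputable local instance (α : Type u) : DecidableEq α := Classical.decEq α

/-- letters occurring in a free group word -/
def wLetters {α : Type u} (w : FreeGroup α) : Set α := {a | ∃ b, (a, b) ∈ w.toWord}

lemma wLetters_sub {α : Type u} (w : FreeGroup α) :
    wLetters w ⊆ {a | a ∈ w.toWord.map Prod.fst} := by
  rintro a ⟨b, hb⟩
  simp only [Set.mem_setOf_eq, List.mem_map]
  exact ⟨(a, b), hb, rfl⟩

lemma wLetters_finite {α : Type u} (w : FreeGroup α) : (wLetters w).Finite :=
  (List.finite_toSet _).subset (wLetters_sub w)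

lemma lift_congr {α G : Type u} [Group G] {f g : α → G} {w : FreeGroup α}
    (h : ∀ a ∈ wLetters w, f a = g a) :
    FreeGroup.lift f w = FreeGroup.lift g w := by
  conv_lhs => rw [← FreeGroup.mk_toWord (x := w)]
  conv_rhs => rw [← FreeGroup.mk_toWord (x := w)]
  rw [FreeGroup.lift_mk, FreeGroup.lift_mk]
  congr 1
  apply List.map_congr_left
  rintro ⟨a, b⟩ hp
  rw [h a ⟨b, hp⟩]

lemma hom_lift {α G P : Type u} [Group G] [Group P] (φ : G →* P) (f : α → G) (w : FreeGroup α) :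
    φ (FreeGroup.lift f w) = FreeGroup.lift (⇑φ ∘ f) w := by
  have := FreeGroup.lift_unique (f := ⇑φ ∘ f) (φ.comp (FreeGroup.lift f))
    (by intro x; simp) (x := w)
  simpa using this

lemma lift_map {α β G : Type u} [Group G] (f : α → β) (g : β → G) (w : FreeGroup α) :
    FreeGroup.lift g (FreeGroup.map f w) = FreeGroup.lift (g ∘ f) w := by
  have := FreeGroup.lift_unique (f := g ∘ f) ((FreeGroup.lift g).comp (FreeGroup.map f))
    (by intro x; simp) (x := w)
  simpa using this

lemma mk_freeGroup_le (α : Type u) : #(FreeGroup α) ≤ max ℵ₀ #α := by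
  calc #(FreeGroup α) ≤ #(List (α × Bool)) :=
        mk_le_of_injective FreeGroup.toWord_injective
    _ ≤ max ℵ₀ #(α × Bool) := mk_list_le_max _
    _ ≤ max ℵ₀ #α := by
        apply max_le (le_max_left _ _)
        have : #(α × Bool) = #α + #α := by
          apply mk_congr
          exact (Equiv.prodComm _ _).trans (Equiv.boolProdEquivSum α)
        rw [this]
        exact (add_le_max _ _).trans (by simp [max_comm, max_assoc])

lemma mk_subgroup_closure_le {G : Type u} [Group G] (s : Set G) :
    #(Subgroup.closure s) ≤ max ℵ₀ #s := by
  have h := FreeGroup.range_lift_eq_closure (f := (Subtype.val : s → G))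
  rw [Subtype.range_coe] at h
  have hsurj : Function.Surjective
      (fun w : FreeGroup s => (⟨FreeGroup.lift (Subtype.val : s → G) w,
        h ▸ MonoidHom.mem_range.2 ⟨w, rfl⟩⟩ : Subgroup.closure s)) := by
    rintro ⟨x, hx⟩
    rw [← h] at hx
    obtain ⟨w, hw⟩ := MonoidHom.mem_range.1 hx
    exact ⟨w, Subtype.ext hw⟩
  exact (mk_le_of_surjective hsurj).trans (mk_freeGroup_le _)


private def Gfam (A L : Type u) : ULift.{u} Bool → Type u := fun b => match b with
  | ⟨true⟩ => A
  | ⟨false⟩ => L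

private instance (A L : Type u) [Group A] [Group L] : ∀ b, Group (Gfam A L b) := fun b =>
  match b with
  | ⟨true⟩ => (inferInstance : Group A)
  | ⟨false⟩ => (inferInstance : Group L)

private def φfam {C A L : Type u} [Group C] [Group A] [Group L] (f : C →* A) (g : C →* L) :
    ∀ b, C →* Gfam A L b := fun b => match b with
  | ⟨true⟩ => f
  | ⟨false⟩ => g

lemma exists_amalgam {C A L : Type u} [Group C] [Group A] [Group L]
    (f : C →* A) (g : C →* L) (hf : Function.Injective f) (hg : Function.Injective g) :
    ∃ (P : Type u) (_ : Group P) (iA : A →* P) (iL : L →* P),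
      Function.Injective iA ∧ Function.Injective iL ∧ ∀ c, iA (f c) = iL (g c) := by
  have hφ : ∀ b, Function.Injective (φfam f g b) := fun b => match b with
    | ⟨true⟩ => hf
    | ⟨false⟩ => hg
  refine ⟨Monoid.PushoutI (φfam f g), inferInstance, Monoid.PushoutI.of (φ := φfam f g) (⟨true⟩ : ULift Bool),
    Monoid.PushoutI.of (φ := φfam f g) (⟨false⟩ : ULift Bool), Monoid.PushoutI.of_injective hφ _,
    Monoid.PushoutI.of_injective hφ _, fun c => ?_⟩
  exact (Monoid.PushoutI.of_apply_eq_base (φfam f g) ⟨true⟩ c).trans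
    (Monoid.PushoutI.of_apply_eq_base (φfam f g) ⟨false⟩ c).symm


lemma regular_of_powerlt {lam : Cardinal.{u}} (hlam : ℵ₀ < lam) (hpow : lam ^< lam = lam) :
    lam ≤ (lam.ord).cof := by
  by_contra hcf
  push_neg at hcf
  have h1 : lam < lam ^ (lam.ord).cof := Cardinal.lt_power_cof hlam.le
  have h2 : lam ^ (lam.ord).cof ≤ lam ^< lam := Cardinal.le_powerlt lam hcf
  rw [hpow] at h2
  exact absurd (h1.trans_le h2) (lt_irrefl _)

lemma mk_small_subsets {lam : Cardinal.{u}} (hlam : ℵ₀ < lam) (hpow : lam ^< lam = lam)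
    {W : Type u} (hW : #W ≤ lam) : #{s : Set W // #s < lam} ≤ lam := by
  classical
  set I := (lam.ord).ToType with hI
  have hmkI : #I = lam := by rw [hI, Cardinal.mk_toType, Cardinal.card_ord]
  let e := Ordinal.ToType.mk (o := lam.ord)
  let T : I → Type u := fun i => ((e.symm i : Ordinal)).ToType
  have hT : ∀ i, #(T i) < lam := by
    intro i
    have := (e.symm i).2
    simp only [Set.mem_Iio] at this
    rw [show #(T i) = ((e.symm i : Ordinal)).card from Cardinal.mk_toType _]
    exact (Cardinal.lt_ord).1 this
  -- injection into sigma
  have key : ∀ s : {s : Set W // #s < lam}, ∃ p : Σ i : I, T i → Option W,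
      s.1 = {w | ∃ t, p.2 t = some w} := by
    rintro ⟨s, hs⟩
    have ho : (#s).ord < lam.ord := Cardinal.ord_lt_ord.2 hs
    have hTe : T (e ⟨(#s).ord, ho⟩) = ((#s).ord).ToType := by
      simp only [T, OrderIso.symm_apply_apply]
    have hcard : #(T (e ⟨(#s).ord, ho⟩)) = #s := by
      rw [hTe, Cardinal.mk_toType, Cardinal.card_ord]
    obtain ⟨eqv⟩ : Nonempty (T (e ⟨(#s).ord, ho⟩) ≃ s) := Cardinal.eq.1 hcard
    refine ⟨⟨e ⟨(#s).ord, ho⟩, fun t => some ((eqv t : s) : W)⟩, ?_⟩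
    ext w
    simp only [Set.mem_setOf_eq]
    constructor
    · intro hw
      exact ⟨eqv.symm ⟨w, hw⟩, by simp⟩
    · rintro ⟨t, ht⟩
      cases Option.some.inj ht
      exact (eqv t).2
  choose p hp using key
  have hinj : Function.Injective p := by
    intro s s' h
    apply Subtype.ext
    rw [hp s, hp s', h]
  calc #{s : Set W // #s < lam} ≤ #(Σ i : I, T i → Option W) := mk_le_of_injective hinj
    _ = Cardinal.sum (fun i => #(T i → Option W)) := mk_sigma _
    _ ≤ Cardinal.sum (fun _ : I => lam) := by
        apply Cardinal.sum_le_sum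
        intro i
        rw [← Cardinal.power_def]
        have h1 : #(Option W) ≤ lam := by
          rw [mk_option]
          calc #W + 1 ≤ lam + 1 := by exact add_le_add_left hW 1
            _ = lam := by
                rw [Cardinal.add_one_eq hlam.le]
        calc #(Option W) ^ #(T i) ≤ lam ^ #(T i) :=
              Cardinal.power_le_power_right h1
          _ ≤ lam ^< lam := Cardinal.le_powerlt lam (hT i)
          _ = lam := hpow
    _ = #I * lam := Cardinal.sum_const' I lam
    _ = lam := by rw [hmkI, Cardinal.mul_eq_self hlam.le]


section Main

variable (lam : Cardinal.{u}) {H : Type u} [Group H]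

/-- canonical variable type of size `lam` -/
def X0 : Type u := lam.out

lemma mk_X0 : #(X0 lam) = lam := Cardinal.mk_out lam

/-- `v : X0 lam → H` solves the system `(eqs, ineqs)` over the subgroup `G` inside `H`. -/
def GoodSol (G : Subgroup H) (eqs ineqs : Set (FreeGroup (↥G ⊕ X0 lam)))
    (v : X0 lam → H) : Prop :=
  (∀ w ∈ eqs, FreeGroup.lift (Sum.elim (fun c : ↥G => (c : H)) v) w = 1) ∧
  (∀ w ∈ ineqs, FreeGroup.lift (Sum.elim (fun c : ↥G => (c : H)) v) w ≠ 1)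

/-- The system `(eqs, ineqs)` over `G` is solvable in some overgroup of `G`. -/
def SolvableP (G : Subgroup H) (eqs ineqs : Set (FreeGroup (↥G ⊕ X0 lam))) : Prop :=
  ∃ (L : Type u) (_ : Group L) (i : ↥G →* L), Function.Injective i ∧
    ∃ v : X0 lam → L,
      (∀ w ∈ eqs, FreeGroup.lift (Sum.elim (⇑i) v) w = 1) ∧
      (∀ w ∈ ineqs, FreeGroup.lift (Sum.elim (⇑i) v) w ≠ 1)

lemma solvable_imp_sol {κ : Cardinal.{u}} (hle : lam ≤ κ) (hH : IsKappaEC κ H)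
    (G : Subgroup H) (eqs ineqs : Set (FreeGroup (↥G ⊕ X0 lam)))
    (h1 : #eqs < lam) (h2 : #ineqs < lam)
    (hs : SolvableP lam G eqs ineqs) : ∃ v, GoodSol lam G eqs ineqs v := by
  obtain ⟨L, _, i, hi, v, hv1, hv2⟩ := hs
  obtain ⟨P, _, iH, iL, hiH, hiL, hcomm⟩ :=
    exists_amalgam G.subtype i G.subtype_injective hi
  set emb : ↥G ⊕ X0 lam → H ⊕ X0 lam := Sum.map (fun c => (c : H)) id with hemb
  have hkey : ∀ (Q : Type u) (_ : Group Q) (j : H → Q) (u : X0 lam → Q)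
      (w : FreeGroup (↥G ⊕ X0 lam)),
      FreeGroup.lift (Sum.elim j u) (FreeGroup.map emb w) =
        FreeGroup.lift (Sum.elim (fun c : ↥G => j (c : H)) u) w := by
    intro Q _ j u w
    rw [lift_map]
    have : Sum.elim j u ∘ emb = Sum.elim (fun c : ↥G => j (c : H)) u := by
      funext a
      cases a with
      | inl c => rfl
      | inr x => rfl
    rw [this]
  obtain ⟨v', hv'1, hv'2⟩ := hH (X0 lam) (FreeGroup.map emb '' eqs) (FreeGroup.map emb '' ineqs)
    (mk_image_le.trans_lt h1 |>.trans_le hle) (mk_image_le.trans_lt h2 |>.trans_le hle)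
    ⟨P, inferInstance, iH, hiH, ⇑iL ∘ v, by
      constructor
      · rintro w' ⟨w, hw, rfl⟩
        rw [hkey P inferInstance (⇑iH) (⇑iL ∘ v) w]
        have : (Sum.elim (fun c : ↥G => iH (c : H)) (⇑iL ∘ v)) = ⇑iL ∘ Sum.elim (⇑i) v := by
          funext a; cases a with
          | inl c => exact hcomm c
          | inr x => rfl
        rw [this, ← hom_lift, hv1 w hw, map_one]
      · rintro w' ⟨w, hw, rfl⟩
        rw [hkey P inferInstance (⇑iH) (⇑iL ∘ v) w]
        have : (Sum.elim (fun c : ↥G => iH (c : H)) (⇑iL ∘ v)) = ⇑iL ∘ Sum.elim (⇑i) v := by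
          funext a; cases a with
          | inl c => exact hcomm c
          | inr x => rfl
        rw [this, ← hom_lift]
        intro hcon
        exact hv2 w hw (hiL (by rw [hcon, map_one]))⟩
  refine ⟨v', fun w hw => ?_, fun w hw => ?_⟩
  · have := hv'1 _ ⟨w, hw, rfl⟩
    rwa [hkey H inferInstance (id : H → H) v' w] at this
  · have := hv'2 _ ⟨w, hw, rfl⟩
    rw [hkey H inferInstance (id : H → H) v' w] at this
    exact this


/-- helper: cardinality of a sup of two subgroups -/
lemma mk_sup_le {A B : Subgroup H} {c : Cardinal.{u}} (hc : ℵ₀ ≤ c)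
    (hA : #A ≤ c) (hB : #B ≤ c) : #(A ⊔ B : Subgroup H) ≤ c := by
  rw [Subgroup.sup_eq_closure]
  refine (mk_subgroup_closure_le _).trans (max_le hc ?_)
  refine (mk_union_le _ _).trans ?_
  calc #(A : Set H) + #(B : Set H) ≤ c + c := by
        exact add_le_add hA hB
    _ = c := Cardinal.add_eq_self hc

/-- helper: cardinality of an indexed sup of subgroups -/
lemma mk_iSup_le {ι : Type u} {f : ι → Subgroup H} {c : Cardinal.{u}} (hc : ℵ₀ ≤ c)
    (hι : #ι ≤ c) (hf : ∀ i, #(f i) ≤ c) : #(⨆ i, f i : Subgroup H) ≤ c := by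
  rw [Subgroup.iSup_eq_closure]
  refine (mk_subgroup_closure_le _).trans (max_le hc ?_)
  refine (mk_iUnion_le_sum_mk).trans ?_
  calc (Cardinal.sum fun i => #((f i : Subgroup H) : Set H)) ≤ Cardinal.sum fun _ : ι => c :=
        Cardinal.sum_le_sum _ _ fun i => hf i
    _ = #ι * c := Cardinal.sum_const' ι c
    _ ≤ c * c := mul_le_mul_left hι c
    _ = c := Cardinal.mul_eq_self hc

/-- The type of (solvable, small) systems over a subgroup `G`. -/
def Sys (G : Subgroup H) : Type u :=
  {p : Set (FreeGroup (↥G ⊕ X0 lam)) × Set (FreeGroup (↥G ⊕ X0 lam)) //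
    #(p.1) < lam ∧ #(p.2) < lam ∧ SolvableP lam G p.1 p.2}

variable {lam}

lemma mk_Sys_le (hlam : ℵ₀ < lam) (hpow : lam ^< lam = lam) {G : Subgroup H}
    (hG : #G ≤ lam) : #(Sys lam G) ≤ lam := by
  have hW : #(FreeGroup (↥G ⊕ X0 lam)) ≤ lam := by
    refine (mk_freeGroup_le _).trans (max_le hlam.le ?_)
    rw [mk_sum]
    simp only [Cardinal.lift_id]
    rw [mk_X0]
    calc #↥G + lam ≤ lam + lam := add_le_add_left hG lam
      _ = lam := Cardinal.add_eq_self hlam.le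
  have hsmall := mk_small_subsets hlam hpow hW
  have : #(Sys lam G) ≤ #({s : Set (FreeGroup (↥G ⊕ X0 lam)) // #s < lam} ×
      {s : Set (FreeGroup (↥G ⊕ X0 lam)) // #s < lam}) := by
    refine mk_le_of_injective (f := fun p => (⟨p.1.1, p.2.1⟩, ⟨p.1.2, p.2.2.1⟩)) ?_
    rintro ⟨⟨a, b⟩, _⟩ ⟨⟨a', b'⟩, _⟩ hpq
    simp only [Prod.mk.injEq, Subtype.mk.injEq] at hpq
    cases hpq.1; cases hpq.2; rfl
  refine this.trans ?_
  rw [mk_prod]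
  simp only [Cardinal.lift_id]
  calc _ ≤ lam * lam := mul_le_mul' hsmall hsmall
    _ = lam := Cardinal.mul_eq_self hlam.le

variable (lam)

section Step

variable {κ : Cardinal.{u}} (hle : lam ≤ κ) (hH : IsKappaEC κ H)

/-- One saturation step: adjoin solutions for all small solvable systems over `G`. -/
noncomputable def stepG (G : Subgroup H) : Subgroup H :=
  G ⊔ Subgroup.closure (⋃ p : Sys lam G, Set.range (Classical.choose
    (solvable_imp_sol lam hle hH G p.1.1 p.1.2 p.2.1 p.2.2.1 p.2.2.2)))

lemma le_stepG (G : Subgroup H) : G ≤ stepG lam hle hH G := le_sup_left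

lemma stepG_sol {G : Subgroup H} (p : Sys lam G) :
    ∃ v, GoodSol lam G p.1.1 p.1.2 v ∧ ∀ x, v x ∈ stepG lam hle hH G := by
  refine ⟨_, Classical.choose_spec
    (solvable_imp_sol lam hle hH G p.1.1 p.1.2 p.2.1 p.2.2.1 p.2.2.2), fun x => ?_⟩
  apply (le_sup_right : _ ≤ stepG lam hle hH G)
  exact Subgroup.subset_closure (Set.mem_iUnion.2 ⟨p, Set.mem_range_self x⟩)

lemma mk_stepG_le (hlam : ℵ₀ < lam) (hpow : lam ^< lam = lam) {G : Subgroup H}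
    (hG : #G ≤ lam) : #(stepG lam hle hH G) ≤ lam := by
  refine mk_sup_le hlam.le hG ?_
  refine (mk_subgroup_closure_le _).trans (max_le hlam.le ?_)
  refine (mk_iUnion_le_sum_mk).trans ?_
  calc (Cardinal.sum fun p : Sys lam G => #(Set.range (Classical.choose
          (solvable_imp_sol lam hle hH G p.1.1 p.1.2 p.2.1 p.2.2.1 p.2.2.2)))) ≤
        Cardinal.sum fun _ : Sys lam G => lam := by
        refine Cardinal.sum_le_sum _ _ fun p => ?_
        refine mk_range_le.trans ?_
        rw [mk_X0]
    _ = #(Sys lam G) * lam := Cardinal.sum_const' _ lam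
    _ ≤ lam * lam := mul_le_mul_left (mk_Sys_le hlam hpow hG) lam
    _ = lam := Cardinal.mul_eq_self hlam.le

/-- The transfinite chain of subgroups, indexed by `lam.ord.ToType`. -/
noncomputable def chainF (K : Subgroup H) : (lam.ord).ToType → Subgroup H :=
  WellFoundedLT.fix fun i rec =>
    stepG lam hle hH (K ⊔ ⨆ j : {j : (lam.ord).ToType // j < i}, rec j j.2)

lemma chainF_eq (K : Subgroup H) (i : (lam.ord).ToType) :
    chainF lam hle hH K i =
      stepG lam hle hH (K ⊔ ⨆ j : {j : (lam.ord).ToType // j < i},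
        chainF lam hle hH K j) :=
  WellFoundedLT.fix_eq _ i

lemma K_le_chainF (K : Subgroup H) (i : (lam.ord).ToType) : K ≤ chainF lam hle hH K i := by
  rw [chainF_eq]
  exact le_sup_left.trans (le_stepG lam hle hH _)

lemma chainF_mono (K : Subgroup H) : Monotone (chainF lam hle hH K) := by
  intro i i' hii
  rcases eq_or_lt_of_le hii with rfl | hlt
  · exact le_rfl
  · rw [chainF_eq lam hle hH K i']
    refine le_trans ?_ (le_stepG lam hle hH _)
    refine le_trans ?_ le_sup_right
    exact le_iSup (fun j : {j : (lam.ord).ToType // j < i'} => chainF lam hle hH K j) ⟨i, hlt⟩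

lemma mk_chainF_le (hlam : ℵ₀ < lam) (hpow : lam ^< lam = lam) (K : Subgroup H)
    (hK : #K ≤ lam) (i : (lam.ord).ToType) : #(chainF lam hle hH K i) ≤ lam := by
  induction i using WellFoundedLT.induction with
  | ind i IH =>
    rw [chainF_eq]
    refine mk_stepG_le lam hle hH hlam hpow ?_
    refine mk_sup_le hlam.le hK ?_
    refine mk_iSup_le hlam.le ?_ fun j => IH j j.2
    calc #{j : (lam.ord).ToType // j < i} ≤ #((lam.ord).ToType) := mk_subtype_le _
      _ = lam := by rw [Cardinal.mk_toType, Cardinal.card_ord]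

end Step

theorem main (lam κ : Cardinal.{u}) (hlam : Cardinal.aleph0 < lam) (hle : lam ≤ κ)
    (hpow : lam ^< lam = lam)
    (H : Type u) [Group H] (hH : IsKappaEC κ H)
    (K : Subgroup H) (hK : Cardinal.mk K = lam) :
    ∃ Kbar : Subgroup H, K ≤ Kbar ∧ Cardinal.mk Kbar = lam ∧ IsKappaEC lam Kbar := by
  classical
  have hlam0 : lam ≠ 0 := by
    intro h; rw [h] at hlam; exact absurd hlam (by simp)
  haveI hIne : Nonempty ((lam.ord).ToType) := by
    rw [Ordinal.nonempty_toType_iff]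
    intro h
    have := congrArg Ordinal.card h
    rw [Cardinal.card_ord, Ordinal.card_zero] at this
    exact hlam0 this
  have hmkI : #((lam.ord).ToType) = lam := by rw [Cardinal.mk_toType, Cardinal.card_ord]
  set F : (lam.ord).ToType → Subgroup H := chainF lam hle hH K with hF
  set Kbar : Subgroup H := ⨆ i, F i with hKbar
  have hFKbar : ∀ i, F i ≤ Kbar := le_iSup F
  have hKle : K ≤ Kbar :=
    (K_le_chainF lam hle hH K (Classical.arbitrary _)).trans (hFKbar _)
  have hdir : Directed (· ≤ ·) F := (chainF_mono lam hle hH K).directed_le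
  have hmem : ∀ x : H, x ∈ Kbar ↔ ∃ i, x ∈ F i := fun x =>
    Subgroup.mem_iSup_of_directed hdir
  have hcard : #Kbar = lam := by
    apply le_antisymm
    · exact mk_iSup_le hlam.le hmkI.le
        (fun i => mk_chainF_le lam hle hH hlam hpow K hK.le i)
    · rw [← hK]
      exact mk_le_of_injective (Subgroup.inclusion_injective hKle)
  refine ⟨Kbar, hKle, hcard, ?_⟩
  -- the λ-e.c. property
  intro X eqs ineqs h1 h2 hsolv
  obtain ⟨P, _, ip, hip, vP, hvP1, hvP2⟩ := hsolv
  haveI : Nonempty (X0 lam) := by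
    rw [← Cardinal.mk_ne_zero_iff, mk_X0]; exact hlam0
  set ES : Set (FreeGroup (↥Kbar ⊕ X)) := eqs ∪ ineqs with hES
  have hESlt : #ES < lam := (mk_union_le _ _).trans_lt
    (Cardinal.add_lt_of_lt hlam.le h1 h2)
  set C : Set ↥Kbar := ⋃ w : ES, {c : ↥Kbar | Sum.inl c ∈ wLetters w.1} with hC
  set V : Set X := ⋃ w : ES, {x : X | Sum.inr x ∈ wLetters w.1} with hV
  have hfinC : ∀ w : ES, {c : ↥Kbar | Sum.inl c ∈ wLetters w.1}.Finite := by
    intro w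
    exact Set.Finite.preimage Sum.inl_injective.injOn (wLetters_finite w.1)
  have hfinV : ∀ w : ES, {x : X | Sum.inr x ∈ wLetters w.1}.Finite := by
    intro w
    exact Set.Finite.preimage Sum.inr_injective.injOn (wLetters_finite w.1)
  have hCV_bound : ∀ {β : Type u} (S : ES → Set β), (∀ w, (S w).Finite) → #(⋃ w, S w) < lam := by
    intro β S hfin
    refine (mk_iUnion_le_sum_mk).trans_lt ?_
    calc (Cardinal.sum fun w => #(S w)) ≤ Cardinal.sum fun _ : ES => ℵ₀ :=
          Cardinal.sum_le_sum _ _ fun w => ((hfin w).lt_aleph0).le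
      _ = #ES * ℵ₀ := Cardinal.sum_const' _ _
      _ < lam := Cardinal.mul_lt_of_lt hlam.le hESlt hlam
  have hClt : #C < lam := hCV_bound _ hfinC
  have hVlt : #V < lam := hCV_bound _ hfinV
  -- choose indices for coefficients
  have hidx0 : ∀ c : C, ∃ i, ((c : ↥Kbar) : H) ∈ F i := fun c => (hmem _).1 (c.1).2
  choose idx hidx using hidx0
  -- strict upper bound for the indices
  have hreg := regular_of_powerlt hlam hpow
  have hbdd : Set.Bounded (· < ·) (Set.range idx) := by
    by_contra hnb
    have hcof : IsCofinal (Set.range idx) := by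
      intro a
      by_contra hna; push_neg at hna
      exact hnb ⟨a, fun x hx => hna x hx⟩
    have := Order.cof_le hcof
    rw [Ordinal.cof_toType] at this
    exact absurd (this.trans_lt (mk_range_le.trans_lt hClt)) (not_lt.2 hreg)
  obtain ⟨b, hb⟩ := hbdd
  set Gb : Subgroup H := K ⊔ ⨆ j : {j : (lam.ord).ToType // j < b}, F j with hGb
  have hFb : F b = stepG lam hle hH Gb := chainF_eq lam hle hH K b
  have hGbKbar : Gb ≤ Kbar := sup_le hKle (iSup_le fun j => hFKbar j)
  have hCGb : ∀ c : ↥Kbar, c ∈ C → (c : H) ∈ Gb := by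
    intro c hc
    have h1' : (c : H) ∈ F (idx ⟨c, hc⟩) := hidx ⟨c, hc⟩
    have h2' : F (idx ⟨c, hc⟩) ≤ Gb := by
      refine le_trans ?_ le_sup_right
      exact le_iSup (fun j : {j : (lam.ord).ToType // j < b} => F j)
        ⟨idx ⟨c, hc⟩, hb _ (Set.mem_range_self _)⟩
    exact h2' h1'
  -- variable renaming
  obtain ⟨e⟩ : Nonempty (V ↪ X0 lam) := by
    rw [← Cardinal.le_def, mk_X0]
    exact hVlt.le
  set g : ↥Kbar ⊕ X → ↥Gb ⊕ X0 lam := fun a => match a with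
    | .inl c => .inl (if h : (c : H) ∈ Gb then ⟨(c : H), h⟩ else 1)
    | .inr x => .inr (if h : x ∈ V then e ⟨x, h⟩ else Classical.arbitrary _) with hg
  set tr : FreeGroup (↥Kbar ⊕ X) →* FreeGroup (↥Gb ⊕ X0 lam) := FreeGroup.map g with htr
  -- the transported system is solvable
  have hsolv0 : SolvableP lam Gb (tr '' eqs) (tr '' ineqs) := by
    refine ⟨P, inferInstance, ip.comp (Subgroup.inclusion hGbKbar),
      hip.comp (Subgroup.inclusion_injective hGbKbar), ?_⟩
    set v₀ : X0 lam → P := fun y =>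
      if h : ∃ xv : V, e xv = y then vP (Classical.choose h).1 else 1 with hv₀
    have key : ∀ w ∈ ES,
        FreeGroup.lift (Sum.elim (⇑(ip.comp (Subgroup.inclusion hGbKbar))) v₀) (tr w) =
          FreeGroup.lift (Sum.elim (⇑ip) vP) w := by
      intro w hw
      rw [htr, lift_map]
      apply lift_congr
      intro a ha
      cases a with
      | inl c =>
        have hcC : c ∈ C := Set.mem_iUnion.2 ⟨⟨w, hw⟩, ha⟩
        have hcGb : (c : H) ∈ Gb := hCGb c hcC
        simp only [Function.comp_apply, hg, dif_pos hcGb, Sum.elim_inl, MonoidHom.coe_comp]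
        congr 1
      | inr x =>
        have hxV : x ∈ V := Set.mem_iUnion.2 ⟨⟨w, hw⟩, ha⟩
        have hex : ∃ xv : V, e xv = e ⟨x, hxV⟩ := ⟨⟨x, hxV⟩, rfl⟩
        simp only [Function.comp_apply, hg, dif_pos hxV, Sum.elim_inr, hv₀, dif_pos hex]
        have : Classical.choose hex = ⟨x, hxV⟩ := e.injective (Classical.choose_spec hex)
        rw [this]
    refine ⟨v₀, ?_, ?_⟩
    · rintro w' ⟨w, hw, rfl⟩
      rw [key w (Or.inl hw)]
      exact hvP1 w hw
    · rintro w' ⟨w, hw, rfl⟩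
      rw [key w (Or.inr hw)]
      exact hvP2 w hw
  -- get a solution inside F b
  set p : Sys lam Gb := ⟨(tr '' eqs, tr '' ineqs),
    mk_image_le.trans_lt h1, mk_image_le.trans_lt h2, hsolv0⟩ with hp
  obtain ⟨vs, hvsGood, hvsmem⟩ := stepG_sol lam hle hH p
  have hvsKbar : ∀ y, vs y ∈ Kbar := fun y => hFKbar b (hFb ▸ hvsmem y)
  -- the final solution
  set v' : X → ↥Kbar := fun x =>
    if h : x ∈ V then ⟨vs (e ⟨x, h⟩), hvsKbar _⟩ else 1 with hv'
  have key2 : ∀ w ∈ ES,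
      Kbar.subtype (FreeGroup.lift (Sum.elim (id : ↥Kbar → ↥Kbar) v') w) =
        FreeGroup.lift (Sum.elim (fun c : ↥Gb => (c : H)) vs) (tr w) := by
    intro w hw
    rw [hom_lift, htr, lift_map]
    apply lift_congr
    intro a ha
    cases a with
    | inl c =>
      have hcC : c ∈ C := Set.mem_iUnion.2 ⟨⟨w, hw⟩, ha⟩
      have hcGb : (c : H) ∈ Gb := hCGb c hcC
      simp only [Function.comp_apply, Sum.elim_inl, hg, dif_pos hcGb]
      rfl
    | inr x =>
      have hxV : x ∈ V := Set.mem_iUnion.2 ⟨⟨w, hw⟩, ha⟩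
      simp only [Function.comp_apply, Sum.elim_inr, hg, hv', dif_pos hxV]
      rfl
  refine ⟨v', fun w hw => ?_, fun w hw => ?_⟩
  · apply Kbar.subtype_injective
    rw [map_one, key2 w (Or.inl hw)]
    exact hvsGood.1 _ ⟨w, hw, rfl⟩
  · intro hcon
    apply hvsGood.2 _ ⟨w, hw, rfl⟩
    rw [← key2 w (Or.inr hw), hcon, map_one]

end Main
end ECAux

/-- Let `λ ≤ κ` be uncountable cardinals with `λ^{<λ} = λ`, `H` a `κ`-existentially closed
group and `K ≤ H` a subgroup of cardinality `λ`. Then there is a `λ`-existentially closed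
subgroup `K̄` of `H` of cardinality `λ` with `K ≤ K̄`. -/
theorem stmt_11 (lam κ : Cardinal.{u}) (hlam : Cardinal.aleph0 < lam) (hle : lam ≤ κ)
    (hpow : lam ^< lam = lam)
    (H : Type u) [Group H] (hH : IsKappaEC κ H)
    (K : Subgroup H) (hK : Cardinal.mk K = lam) :
    ∃ Kbar : Subgroup H, K ≤ Kbar ∧ Cardinal.mk Kbar = lam ∧ IsKappaEC lam Kbar := by
  exact ECAux.main lam κ hlam hle hpow H hH K hK
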